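/- Let S have density f_S(s) = nⁿαⁿ e^{-nα/s}/(Γ(n) s^{n+1}) on (0,∞), and fix x ∈ (0,1) and a positive integer r. Then E[(S(2-2x)(2x-x²)^{S-1})^r] = [2(nα)^{(r+n)/2}(2-2x)^r / (Γ(n)(2x-x²)^r)] · (-1/(r ln(2x-x²)))^{(r-n)/2} · K_{r-n}(2√(-nαr ln(2x-x²))), where K_ν is the modified Bessel function of the second kind. -/

import Mathlib

open MeasureTheory Set

/-- Modified Bessel function of the second kind, via its integral representation
`K_ν(x) = (1/2) ∫₀^∞ t^(ν-1) exp(-(x/2)(t + 1/t)) dt` (valid for `x > 0`). -/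
noncomputable def besselK (ν x : ℝ) : ℝ :=
  (1/2) * ∫ t in Ioi (0:ℝ), t ^ (ν - 1) * Real.exp (-(x/2) * (t + 1/t))

lemma besselK_integral (ν β γ : ℝ) (hβ : 0 < β) (hγ : 0 < γ) :
    ∫ s in Ioi (0:ℝ), s ^ (ν - 1) * Real.exp (-(β/s) - γ*s)
      = 2 * (β/γ) ^ (ν/2) * besselK ν (2 * Real.sqrt (β*γ)) := by
  have hbg : 0 < β * γ := mul_pos hβ hγ
  set c := Real.sqrt (β/γ) with hc_def
  have hc : 0 < c := Real.sqrt_pos.mpr (div_pos hβ hγ)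
  have h2 : γ * c = Real.sqrt (β*γ) := by
    rw [hc_def, show β*γ = γ^2*(β/γ) by field_simp,
      Real.sqrt_mul (sq_nonneg γ), Real.sqrt_sq hγ.le]
  have h1 : Real.sqrt (β*γ) * c = β := by
    rw [hc_def, ← Real.sqrt_mul hbg.le, show β*γ*(β/γ) = β^2 by field_simp,
      Real.sqrt_sq hβ.le]
  have h3 : ∀ t : ℝ, 0 < t → β / (c*t) = Real.sqrt (β*γ) / t := by
    intro t ht
    rw [div_eq_div_iff (by positivity) ht.ne']
    nlinarith [h1]
  have hsub := integral_comp_mul_left_Ioi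
    (fun s => s ^ (ν - 1) * Real.exp (-(β/s) - γ*s)) 0 hc
  rw [mul_zero] at hsub
  have hpt : ∀ t ∈ Ioi (0:ℝ),
      (c*t) ^ (ν - 1) * Real.exp (-(β/(c*t)) - γ*(c*t))
        = c ^ (ν-1) * (t ^ (ν - 1) * Real.exp (-(2 * Real.sqrt (β*γ) / 2) * (t + 1/t))) := by
    intro t ht
    have ht' : (0:ℝ) < t := ht
    rw [Real.mul_rpow hc.le ht'.le, h3 t ht']
    have h4 : γ*(c*t) = Real.sqrt (β*γ) * t := by rw [← mul_assoc, h2]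
    rw [h4, show -(Real.sqrt (β*γ)/t) - Real.sqrt (β*γ)*t
      = -(2 * Real.sqrt (β*γ) / 2) * (t + 1/t) by ring]
    ring
  calc (∫ s in Ioi (0:ℝ), s ^ (ν - 1) * Real.exp (-(β/s) - γ*s))
      = c • ∫ t in Ioi (0:ℝ), (c*t) ^ (ν - 1) * Real.exp (-(β/(c*t)) - γ*(c*t)) := by
        rw [hsub, smul_smul, mul_inv_cancel₀ hc.ne', one_smul]
    _ = c * ∫ t in Ioi (0:ℝ),
          c ^ (ν-1) * (t ^ (ν - 1) * Real.exp (-(2 * Real.sqrt (β*γ) / 2) * (t + 1/t))) := by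
        rw [smul_eq_mul, setIntegral_congr_fun measurableSet_Ioi hpt]
    _ = (c * c ^ (ν-1)) * ∫ t in Ioi (0:ℝ),
          t ^ (ν - 1) * Real.exp (-(2 * Real.sqrt (β*γ) / 2) * (t + 1/t)) := by
        rw [integral_const_mul]; ring
    _ = 2 * (β/γ) ^ (ν/2) * besselK ν (2 * Real.sqrt (β*γ)) := by
        rw [besselK]
        have hcc : c * c ^ (ν-1) = (β/γ) ^ (ν/2) := by
          rw [hc_def, Real.sqrt_eq_rpow, ← Real.rpow_mul (div_pos hβ hγ).le,
            ← Real.rpow_add (div_pos hβ hγ)]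
          congr 1; ring
        rw [hcc]; ring

theorem mle_pdf_moments (n : ℕ) (hn : 0 < n) (α : ℝ) (hα : 0 < α)
    (x : ℝ) (hx : x ∈ Ioo (0:ℝ) 1) (r : ℕ) (hr : 0 < r) :
    (∫ s in Ioi (0:ℝ),
        (s * (2 - 2*x) * (2*x - x^2) ^ (s - 1)) ^ r
          * ((n:ℝ)^n * α^n * Real.exp (-((n:ℝ) * α) / s) / (Real.Gamma n * s^(n+1))))
      = 2 * ((n:ℝ) * α) ^ (((r:ℝ) + n) / 2) * (2 - 2*x) ^ r
          / (Real.Gamma n * (2*x - x^2) ^ r)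
        * (-1 / ((r:ℝ) * Real.log (2*x - x^2))) ^ (((r:ℝ) - n) / 2)
        * besselK ((r:ℝ) - n)
            (2 * Real.sqrt (-((n:ℝ) * α * r * Real.log (2*x - x^2)))) := by
  obtain ⟨hx0, hx1⟩ := hx
  set A : ℝ := 2 - 2*x with hA
  set b : ℝ := 2*x - x^2 with hb_def
  have hb : 0 < b := by rw [hb_def]; nlinarith
  have hb1 : b < 1 := by rw [hb_def]; nlinarith
  set L : ℝ := Real.log b with hL_def
  have hL : L < 0 := Real.log_neg hb hb1
  set β : ℝ := (n:ℝ) * α with hβ_def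
  have hβ : 0 < β := by positivity
  set γ : ℝ := -((r:ℝ) * L) with hγ_def
  have hγ : 0 < γ := by
    rw [hγ_def]
    have : (0:ℝ) < r := by exact_mod_cast hr
    nlinarith
  have hG : 0 < Real.Gamma n := Real.Gamma_pos_of_pos (by exact_mod_cast hn)
  set ν : ℝ := (r:ℝ) - n with hν_def
  set D : ℝ := (n:ℝ)^n * α^n * A^r * b ^ (-(r:ℝ)) / Real.Gamma n with hD_def
  have hpt : ∀ s ∈ Ioi (0:ℝ),
      (s * A * b ^ (s - 1)) ^ r
          * ((n:ℝ)^n * α^n * Real.exp (-β / s) / (Real.Gamma n * s^(n+1)))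
        = D * (s ^ (ν - 1) * Real.exp (-(β/s) - γ*s)) := by
    intro s hs
    have hs' : (0:ℝ) < s := hs
    have e1 : (b ^ (s-1)) ^ r = Real.exp (-(γ*s)) * b ^ (-(r:ℝ)) := by
      rw [← Real.rpow_natCast (b ^ (s-1)) r, ← Real.rpow_mul hb.le,
        show (s-1) * (r:ℝ) = s * r + (-(r:ℝ)) by ring,
        Real.rpow_add hb, Real.rpow_def_of_pos hb (s * r)]
      congr 2
      rw [hγ_def, hL_def]; ring
    have e2 : s ^ r = s ^ (ν - 1) * s ^ (n+1) := by
      rw [← Real.rpow_natCast s r, ← Real.rpow_natCast s (n+1), ← Real.rpow_add hs']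
      congr 1
      rw [hν_def]; push_cast; ring
    have e3 : Real.exp (-(β/s) - γ*s) = Real.exp (-(β/s)) * Real.exp (-(γ*s)) := by
      rw [← Real.exp_add]; ring_nf
    rw [mul_pow, mul_pow, e1, e2, e3, hD_def, neg_div]
    have hsn : s ^ (n+1) ≠ 0 := by positivity
    field_simp
  rw [setIntegral_congr_fun measurableSet_Ioi hpt, integral_const_mul,
    besselK_integral ν β γ hβ hγ]
  have harg : -((n:ℝ) * α * r * Real.log (2*x - x^2)) = β * γ := by
    rw [hβ_def, hγ_def, hL_def, hb_def]; ring
  rw [harg]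
  have hinv : -1 / ((r:ℝ) * Real.log (2*x - x^2)) = γ⁻¹ := by
    rw [hγ_def, hL_def, hb_def]
    rw [neg_div, one_div, inv_neg]
  rw [hinv]
  have hfrac : (β/γ) ^ (ν/2) = β ^ (ν/2) * (γ⁻¹) ^ (ν/2) := by
    rw [div_eq_mul_inv, Real.mul_rpow hβ.le (inv_nonneg.mpr hγ.le)]
  have hbn : (n:ℝ)^n * α^n = β ^ (n:ℕ) := by rw [hβ_def, mul_pow]
  have hβpow : β ^ (n:ℕ) * β ^ (ν/2) = β ^ (((r:ℝ) + n)/2) := by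
    rw [← Real.rpow_natCast β n, ← Real.rpow_add hβ]
    congr 1
    rw [hν_def]; ring
  have hbr : b ^ (-(r:ℝ)) = (b ^ r)⁻¹ := by
    rw [Real.rpow_neg hb.le, Real.rpow_natCast]
  rw [hD_def, hfrac, hbr]
  field_simp
  rw [← hβpow, ← hbn]
  ring
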